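/- arXiv:2411.00811 — 13 statements merged into one kernel-verified Lean document; each statement's English description precedes it below -/
import Mathlib

section
/- The standard polynomial of degree 3 vanishes on S₁: for all Z₁, Z₂, Z₃ ∈ S₁, the alternating sum over all permutations σ ∈ S₃ of sign(σ)·Z_{σ(1)}·Z_{σ(2)}·Z_{σ(3)} equals the zero matrix. -/
open Matrix

variable {K : Type*} [Field K] [CharZero K]

/-- Elements of `S₀`: diag(0, 2a, -2a). -/
def Y0 (a : K) : Matrix (Fin 3) (Fin 3) K :=
  !![0, 0, 0; 0, 2*a, 0; 0, 0, -(2*a)]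

/-- Elements of `S₁`: rows (0, -m, n), (-2n, 0, 0), (2m, 0, 0). -/
def Z1 (m n : K) : Matrix (Fin 3) (Fin 3) K :=
  !![0, -m, n; -(2*n), 0, 0; 2*m, 0, 0]

/-- The standard polynomial of degree 3. -/
def s3 (A B C : Matrix (Fin 3) (Fin 3) K) : Matrix (Fin 3) (Fin 3) K :=
  A*B*C - A*C*B - B*A*C + B*C*A + C*A*B - C*B*A

set_option maxHeartbeats 1000000 in
theorem stmt3 (m1 n1 m2 n2 m3 n3 : K) :
    s3 (Z1 m1 n1) (Z1 m2 n2) (Z1 m3 n3) = 0 := by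
  simp only [s3, Z1, Matrix.mul_fin_three]
  ext i j
  fin_cases i <;> fin_cases j <;> simp <;> ring
end

section
/- For all Y₁, Y₂ ∈ S₀ and Z₁, Z₂ ∈ S₁, we have Y₁·Z₁·Z₂·Y₂ = Y₂·Z₁·Z₂·Y₁. -/
open Matrix

variable {K : Type*} [Field K] [CharZero K]

theorem stmt4 (a1 a2 m1 n1 m2 n2 : K) :
    Y0 a1 * Z1 m1 n1 * Z1 m2 n2 * Y0 a2 = Y0 a2 * Z1 m1 n1 * Z1 m2 n2 * Y0 a1 := by
  simp only [Y0, Z1]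
  ext i j
  fin_cases i <;> fin_cases j <;>
    simp [Matrix.mul_apply, Fin.sum_univ_succ] <;> ring
end

section
/- For all Z₁, Z₂ ∈ S₁ and Y ∈ S₀, the matrix s₃(Z₁, Z₂, Y) commutes with every matrix in S₀ ∪ S₁ (equivalently, with every 3×3 matrix over K, i.e., it is a scalar matrix). -/
open Matrix

variable {K : Type*} [Field K] [CharZero K]

set_option maxHeartbeats 1000000 in
lemma s3_eq (m1 n1 m2 n2 a : K) :
    s3 (Z1 m1 n1) (Z1 m2 n2) (Y0 a) = (8*a*(m2*n1 - m1*n2)) • (1 : Matrix (Fin 3) (Fin 3) K) := by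
  ext i j
  fin_cases i <;> fin_cases j <;>
    simp [s3, Y0, Z1, Matrix.mul_apply, Fin.sum_univ_three, Matrix.one_apply] <;> ring

theorem stmt6 (m1 n1 m2 n2 a : K) :
    ∀ X : Matrix (Fin 3) (Fin 3) K,
      ((∃ b : K, X = Y0 b) ∨ (∃ p q : K, X = Z1 p q)) →
      s3 (Z1 m1 n1) (Z1 m2 n2) (Y0 a) * X = X * s3 (Z1 m1 n1) (Z1 m2 n2) (Y0 a) := by
  rintro X _
  rw [s3_eq]
  simp [Matrix.smul_mul, Matrix.mul_smul]
end

section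
/- For all Y ∈ S₀ and Z₁, Z₂, Z₃ ∈ S₁, we have Y·[Z₁, Z₂]·Z₃ + Z₃·Z₁·Y·Z₂ = 0, where [A, B] = AB − BA. -/
open Matrix

variable {K : Type*} [Field K] [CharZero K]

set_option maxHeartbeats 1000000 in
theorem stmt7 (a m1 n1 m2 n2 m3 n3 : K) :
    Y0 a * (Z1 m1 n1 * Z1 m2 n2 - Z1 m2 n2 * Z1 m1 n1) * Z1 m3 n3
      + Z1 m3 n3 * Z1 m1 n1 * Y0 a * Z1 m2 n2 = 0 := by
  simp only [Y0, Z1, Matrix.mul_fin_three, Matrix.sub_apply, Matrix.of_apply,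
    Matrix.cons_val', Matrix.cons_val_zero, Matrix.cons_val_one, Matrix.head_cons,
    Matrix.empty_val', Matrix.cons_val_fin_one, Matrix.head_fin_const]
  ext i j
  fin_cases i <;> fin_cases j <;> simp [Matrix.vecHead, Matrix.vecTail] <;> ring
end

section
/- For all Z₁, Z₂, Z₃ ∈ S₁ and Y ∈ S₀, we have Z₁·Y·Z₂·Z₃ = Z₃·[Z₂, Z₁]·Y, where [A, B] = AB − BA. -/
open Matrix

variable {K : Type*} [Field K] [CharZero K]

set_option linter.unusedSectionVars false in
set_option maxHeartbeats 1000000 in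
theorem stmt8 (m1 n1 m2 n2 m3 n3 a : K) :
    Z1 m1 n1 * Y0 a * Z1 m2 n2 * Z1 m3 n3
      = Z1 m3 n3 * (Z1 m2 n2 * Z1 m1 n1 - Z1 m1 n1 * Z1 m2 n2) * Y0 a := by
  simp only [Y0, Z1, Matrix.mul_fin_three, Matrix.sub_apply, Matrix.of_apply,
    Matrix.cons_val', Matrix.cons_val_zero, Matrix.cons_val_one, Matrix.head_cons,
    Matrix.empty_val', Matrix.cons_val_fin_one, Matrix.head_fin_const,
    Matrix.cons_val_two, Matrix.tail_cons]
  ext i j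
  fin_cases i <;> fin_cases j <;> simp <;> ring
end

section
/- For all Y ∈ S₀ and Z₁, Z₂, Z₃ ∈ S₁, we have Y·Z₁·Z₂·Z₃ = [[Y, Z₂], Z₃]·Z₁, where [A, B] = AB − BA. -/
open Matrix

variable {K : Type*} [Field K] [CharZero K]

/-- Commutator of matrices. -/
def lb (A B : Matrix (Fin 3) (Fin 3) K) : Matrix (Fin 3) (Fin 3) K := A*B - B*A

lemma fin3_mk_two (h : 2 < 3) : (⟨2, h⟩ : Fin 3) = 2 := rfl

set_option maxHeartbeats 1600000 in
theorem stmt9 (a m1 n1 m2 n2 m3 n3 : K) :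
    Y0 a * Z1 m1 n1 * Z1 m2 n2 * Z1 m3 n3
      = lb (lb (Y0 a) (Z1 m2 n2)) (Z1 m3 n3) * Z1 m1 n1 := by
  ext i j
  fin_cases i <;> fin_cases j <;>
    simp only [Y0, Z1, lb, Matrix.mul_apply, Matrix.sub_apply, Fin.sum_univ_three,
      Matrix.of_apply, Matrix.cons_val', Matrix.cons_val_zero, Matrix.cons_val_one,
      Matrix.head_cons, Matrix.empty_val', Matrix.cons_val_fin_one, Matrix.head_fin_const,
      Matrix.cons_val_two, Matrix.tail_cons, Fin.mk_zero, Fin.mk_one, Matrix.cons_val_succ, fin3_mk_two] <;> ring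
end

section
/- For all Z₁, Z₂, Z₃ ∈ S₁ and Y ∈ S₀, we have Z₁·Z₂·Z₃·Y = Z₃·[[Y, Z₁], Z₂], where [A, B] = AB − BA. -/
open Matrix

variable {K : Type*} [Field K] [CharZero K]

set_option maxHeartbeats 4000000 in
theorem stmt10 (m1 n1 m2 n2 m3 n3 a : K) :
    Z1 m1 n1 * Z1 m2 n2 * Z1 m3 n3 * Y0 a
      = Z1 m3 n3 * lb (lb (Y0 a) (Z1 m1 n1)) (Z1 m2 n2) := by
  unfold Z1 Y0 lb
  ext i j
  fin_cases i <;> fin_cases j <;>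
    simp [Matrix.mul_fin_three, Matrix.sub_apply] <;>
    first
      | ring1
      | (right; ring1)
      | (simp [Matrix.vecHead, Matrix.vecTail]; first | ring1 | (right; ring1))
end

section
/- For all Y ∈ S₀ and Z₁, Z₂, Z₃, Z₄ ∈ S₁, the left-normed commutators satisfy [Y, Z₁, Z₂, Z₃, Z₄] = [Y, Z₃, Z₄, Z₁, Z₂], where [x₁,...,xₙ] denotes the left-normed iterated commutator [[...[x₁,x₂],...],xₙ]. -/
open Matrix

variable {K : Type*} [Field K] [CharZero K]

lemma lbYZ (a m n : K) : lb (Y0 a) (Z1 m n) = Z1 (-(2*a*m)) (2*a*n) := by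
  simp only [lb, Y0, Z1, Matrix.mul_fin_three]
  ext i j
  fin_cases i <;> fin_cases j <;> simp [Matrix.vecHead, Matrix.vecTail] <;> ring

lemma lbZZ (m n m' n' : K) : lb (Z1 m n) (Z1 m' n') = Y0 (n*m' - m*n') := by
  simp only [lb, Y0, Z1, Matrix.mul_fin_three]
  ext i j
  fin_cases i <;> fin_cases j <;> simp [Matrix.vecHead, Matrix.vecTail] <;> ring

theorem stmt11 (a m1 n1 m2 n2 m3 n3 m4 n4 : K) :
    lb (lb (lb (lb (Y0 a) (Z1 m1 n1)) (Z1 m2 n2)) (Z1 m3 n3)) (Z1 m4 n4)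
      = lb (lb (lb (lb (Y0 a) (Z1 m3 n3)) (Z1 m4 n4)) (Z1 m1 n1)) (Z1 m2 n2) := by
  rw [lbYZ, lbZZ, lbYZ, lbZZ, lbYZ, lbZZ, lbYZ, lbZZ]
  congr 1 <;> ring
end

section
/- For any k ≥ 0, for all Y₁, Y₂ ∈ S₀ and Z₁, ..., Z_{2k+1} ∈ S₁, the product Y₁·Z₁·...·Z_{2k+1}·Y₂ is the zero matrix. -/
open Matrix

variable {K : Type*} [Field K] [CharZero K]

/-- shape of products of an odd number of `Z1`'s -/
def IsO (M : Matrix (Fin 3) (Fin 3) K) : Prop :=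
  M 0 0 = 0 ∧ M 1 1 = 0 ∧ M 1 2 = 0 ∧ M 2 1 = 0 ∧ M 2 2 = 0

/-- shape of products of an even number of `Z1`'s -/
def IsE (M : Matrix (Fin 3) (Fin 3) K) : Prop :=
  M 0 1 = 0 ∧ M 0 2 = 0 ∧ M 1 0 = 0 ∧ M 2 0 = 0

lemma isE_one : IsE (1 : Matrix (Fin 3) (Fin 3) K) := by
  constructor <;> [skip; constructor] <;> [skip; skip; constructor] <;> simp [IsE, Matrix.one_apply]

lemma isO_mul (m n : K) {M : Matrix (Fin 3) (Fin 3) K} (h : IsE M) : IsO (Z1 m n * M) := by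
  obtain ⟨h1, h2, h3, h4⟩ := h
  refine ⟨?_, ?_, ?_, ?_, ?_⟩ <;>
    simp [Z1, Matrix.mul_apply, Fin.sum_univ_three, h1, h2, h3, h4]

lemma isE_mul (m n : K) {M : Matrix (Fin 3) (Fin 3) K} (h : IsO M) : IsE (Z1 m n * M) := by
  obtain ⟨h1, h2, h3, h4, h5⟩ := h
  refine ⟨?_, ?_, ?_, ?_⟩ <;>
    simp [Z1, Matrix.mul_apply, Fin.sum_univ_three, h1, h2, h3, h4, h5]

lemma list_shape (l : List (K × K)) :
    (Even l.length → IsE (l.map fun p => Z1 p.1 p.2).prod) ∧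
    (Odd l.length → IsO (l.map fun p => Z1 p.1 p.2).prod) := by
  induction l with
  | nil => exact ⟨fun _ => isE_one, fun h => absurd h (by simp)⟩
  | cons p l ih =>
    constructor
    · intro h
      have : Odd l.length := by
        simpa [Nat.even_add_one, Nat.not_even_iff_odd] using h
      simpa using isE_mul p.1 p.2 (ih.2 this)
    · intro h
      have : Even l.length := by
        simpa [Nat.even_add_one, Nat.odd_add_one] using h
      simpa using isO_mul p.1 p.2 (ih.1 this)

lemma sandwich (a1 a2 : K) {M : Matrix (Fin 3) (Fin 3) K} (h : IsO M) :
    Y0 a1 * M * Y0 a2 = 0 := by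
  obtain ⟨h1, h2, h3, h4, h5⟩ := h
  ext i j
  fin_cases i <;> fin_cases j <;>
    simp [Y0, Matrix.mul_apply, Matrix.vecMul, dotProduct, Fin.sum_univ_three, h1, h2, h3, h4, h5]

theorem stmt13 (k : ℕ) (a1 a2 : K) (m n : Fin (2*k+1) → K) :
    Y0 a1 * (List.ofFn fun i => Z1 (m i) (n i)).prod * Y0 a2 = 0 := by
  have heq : (List.ofFn fun i => Z1 (m i) (n i)) =
      (List.ofFn fun i => ((m i, n i) : K × K)).map fun p => Z1 p.1 p.2 := by
    simp [List.map_ofFn]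
    rfl
  rw [heq]
  apply sandwich
  exact (list_shape _).2 (by simpa using odd_two_mul_add_one k)
end

section
/- For any k ≥ 0, for all Z₁, Z₂ ∈ S₁ and Y₁, ..., Y_{2k+1} ∈ S₀, we have Z₁·Y₁·...·Y_{2k+1}·Z₂ + Z₂·Y₁·...·Y_{2k+1}·Z₁ = 0. -/
open Matrix

variable {K : Type*} [Field K] [CharZero K]

lemma prodY0 (n : ℕ) : ∀ f : Fin (2*n+1) → K, ∃ c : K,
    (List.ofFn fun i => Y0 (f i)).prod = !![(0:K),0,0;0,c,0;0,0,-c] := by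
  induction n with
  | zero =>
    intro f
    refine ⟨2 * f 0, ?_⟩
    simp [List.ofFn_succ, Y0]
  | succ n ih =>
    intro f
    obtain ⟨c, hc⟩ := ih (fun i => f i.succ.succ)
    refine ⟨4 * f 0 * f 1 * c, ?_⟩
    have : (List.ofFn fun i : Fin (2*(n+1)+1) => Y0 (f i)).prod
        = Y0 (f 0) * (Y0 (f 1) * (List.ofFn fun i : Fin (2*n+1) => Y0 (f i.succ.succ)).prod) := by
      rw [List.ofFn_succ, List.ofFn_succ, List.prod_cons, List.prod_cons]
      rfl
    rw [this, hc]
    ext i j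
    fin_cases i <;> fin_cases j <;>
      simp [Y0, Matrix.mul_apply, Fin.sum_univ_succ, Matrix.vecHead, Matrix.vecTail] <;> ring

theorem stmt14 (k : ℕ) (m1 n1 m2 n2 : K) (a : Fin (2*k+1) → K) :
    Z1 m1 n1 * (List.ofFn fun i => Y0 (a i)).prod * Z1 m2 n2
      + Z1 m2 n2 * (List.ofFn fun i => Y0 (a i)).prod * Z1 m1 n1 = 0 := by
  obtain ⟨c, hc⟩ := prodY0 k a
  rw [hc]
  ext i j
  fin_cases i <;> fin_cases j <;>
    simp [Z1, Matrix.mul_apply, Fin.sum_univ_succ, Matrix.vecHead, Matrix.vecTail] <;> ring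
end

section
/- For any k ≥ 1, for all Y₁, Y₂ ∈ S₀ and Z₁, ..., Z_{2k} ∈ S₁, we have Y₁·Z₁·...·Z_{2k}·Y₂ = Y₂·Z₁·...·Z_{2k}·Y₁. -/
open Matrix

variable {K : Type*} [Field K] [CharZero K]

lemma Y0_smul (a : K) : Y0 a = a • (Y0 (1 : K)) := by
  ext i j
  fin_cases i <;> fin_cases j <;> simp [Y0, Matrix.vecHead, Matrix.vecTail] <;> ring

theorem stmt15 (k : ℕ) (hk : 1 ≤ k) (a1 a2 : K) (m n : Fin (2*k) → K) :
    Y0 a1 * (List.ofFn fun i => Z1 (m i) (n i)).prod * Y0 a2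
      = Y0 a2 * (List.ofFn fun i => Z1 (m i) (n i)).prod * Y0 a1 := by
  rw [Y0_smul a1, Y0_smul a2]
  simp only [smul_mul_assoc, mul_smul_comm, smul_smul]
  rw [mul_comm a1 a2]
end

section
/- For all Z₁, Z₂, Z₃ ∈ S₁ and Y ∈ S₀, the element s₃(ad Z₂, ad Z₃, ad Y) applied to Z₁ equals 2·[[Z₁, Y], [Z₂, Z₃]], where ad X denotes the map W ↦ XW − WX on 3×3 matrices. -/
open Matrix

variable {K : Type*} [Field K] [CharZero K]

/-- The adjoint map on 3×3 matrices. -/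
def adM (X : Matrix (Fin 3) (Fin 3) K) : Matrix (Fin 3) (Fin 3) K → Matrix (Fin 3) (Fin 3) K :=
  fun W => X*W - W*X

/-- The standard polynomial of degree 3 on three maps, applied to a matrix. -/
def s3map (f g h : Matrix (Fin 3) (Fin 3) K → Matrix (Fin 3) (Fin 3) K)
    (W : Matrix (Fin 3) (Fin 3) K) : Matrix (Fin 3) (Fin 3) K :=
  f (g (h W)) - f (h (g W)) - g (f (h W)) + g (h (f W)) + h (f (g W)) - h (g (f W))

set_option maxHeartbeats 4000000 in
theorem stmt18 (m1 n1 m2 n2 m3 n3 a : K) :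
    s3map (adM (Z1 m2 n2)) (adM (Z1 m3 n3)) (adM (Y0 a)) (Z1 m1 n1)
      = 2 • lb (lb (Z1 m1 n1) (Y0 a)) (lb (Z1 m2 n2) (Z1 m3 n3)) := by
  simp only [s3map, adM, lb, Z1, Y0, Matrix.mul_fin_three]
  ext i j
  fin_cases i <;> fin_cases j <;>
    simp [Matrix.mul_fin_three, Matrix.vecHead, Matrix.vecTail] <;> ring_nf
end

section
/- The subalgebra of 3×3 matrices over K generated (as an associative algebra) by the set S of matrices with first row (0, -n, m), second row (-2m, 2a, 0), third row (2n, 0, -2a) for a, m, n ∈ K, is all of M₃(K). -/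
open Matrix

set_option maxHeartbeats 1600000 in
theorem stmt19 {K : Type*} [Field K] [CharZero K] :
    Algebra.adjoin K
      {A : Matrix (Fin 3) (Fin 3) K |
        ∃ a m n : K, A = !![0, -n, m; -(2*m), 2*a, 0; 2*n, 0, -(2*a)]} = ⊤ := by
  set T := Algebra.adjoin K
      {A : Matrix (Fin 3) (Fin 3) K |
        ∃ a m n : K, A = !![0, -n, m; -(2*m), 2*a, 0; 2*n, 0, -(2*a)]} with hT
  rw [eq_top_iff]
  have hH : (!![0,0,0;0,2,0;0,0,-2] : Matrix (Fin 3) (Fin 3) K) ∈ T := by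
    apply Algebra.subset_adjoin
    exact ⟨1, 0, 0, by norm_num⟩
  have he : (!![0,0,1;-2,0,0;0,0,0] : Matrix (Fin 3) (Fin 3) K) ∈ T := by
    apply Algebra.subset_adjoin
    exact ⟨0, 1, 0, by norm_num⟩
  have hf : (!![0,-1,0;0,0,0;2,0,0] : Matrix (Fin 3) (Fin 3) K) ∈ T := by
    apply Algebra.subset_adjoin
    exact ⟨0, 0, 1, by norm_num⟩
  have h11 : (!![0,0,0;0,1,0;0,0,0] : Matrix (Fin 3) (Fin 3) K) ∈ T := by
    have h := T.smul_mem (T.add_mem (T.mul_mem hH hH) (T.smul_mem hH (2:K))) ((1:K)/8)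
    convert h using 1
    ext i j
    fin_cases i <;> fin_cases j <;> simp [Matrix.mul_apply, Fin.sum_univ_three, Matrix.vecHead, Matrix.vecTail] <;> norm_num
  have h22 : (!![0,0,0;0,0,0;0,0,1] : Matrix (Fin 3) (Fin 3) K) ∈ T := by
    have h := T.smul_mem (T.sub_mem (T.mul_mem hH hH) (T.smul_mem hH (2:K))) ((1:K)/8)
    convert h using 1
    ext i j
    fin_cases i <;> fin_cases j <;> simp [Matrix.mul_apply, Fin.sum_univ_three, Matrix.vecHead, Matrix.vecTail] <;> norm_num
  have h00 : (!![1,0,0;0,0,0;0,0,0] : Matrix (Fin 3) (Fin 3) K) ∈ T := by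
    have h := T.sub_mem (T.sub_mem T.one_mem h11) h22
    convert h using 1
    ext i j
    fin_cases i <;> fin_cases j <;> simp [Matrix.one_apply, Matrix.vecHead, Matrix.vecTail] <;> norm_num
  have h02 : (!![0,0,1;0,0,0;0,0,0] : Matrix (Fin 3) (Fin 3) K) ∈ T := by
    have h := T.mul_mem (T.mul_mem h00 he) h22
    convert h using 1
    ext i j
    fin_cases i <;> fin_cases j <;> simp [Matrix.mul_apply, Fin.sum_univ_three, Matrix.vecHead, Matrix.vecTail] <;> norm_num
  have h10 : (!![0,0,0;1,0,0;0,0,0] : Matrix (Fin 3) (Fin 3) K) ∈ T := by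
    have h := T.smul_mem (T.mul_mem (T.mul_mem h11 he) h00) (-(1:K)/2)
    convert h using 1
    ext i j
    fin_cases i <;> fin_cases j <;> simp [Matrix.mul_apply, Fin.sum_univ_three, Matrix.vecHead, Matrix.vecTail] <;> norm_num
  have h01 : (!![0,1,0;0,0,0;0,0,0] : Matrix (Fin 3) (Fin 3) K) ∈ T := by
    have h := T.smul_mem (T.mul_mem (T.mul_mem h00 hf) h11) (-(1:K))
    convert h using 1
    ext i j
    fin_cases i <;> fin_cases j <;> simp [Matrix.mul_apply, Fin.sum_univ_three, Matrix.vecHead, Matrix.vecTail] <;> norm_num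
  have h20 : (!![0,0,0;0,0,0;1,0,0] : Matrix (Fin 3) (Fin 3) K) ∈ T := by
    have h := T.smul_mem (T.mul_mem (T.mul_mem h22 hf) h00) ((1:K)/2)
    convert h using 1
    ext i j
    fin_cases i <;> fin_cases j <;> simp [Matrix.mul_apply, Fin.sum_univ_three, Matrix.vecHead, Matrix.vecTail] <;> norm_num
  have h12 : (!![0,0,0;0,0,1;0,0,0] : Matrix (Fin 3) (Fin 3) K) ∈ T := by
    have h := T.mul_mem h10 h02
    convert h using 1
    ext i j
    fin_cases i <;> fin_cases j <;> simp [Matrix.mul_apply, Fin.sum_univ_three, Matrix.vecHead, Matrix.vecTail] <;> norm_num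
  have h21 : (!![0,0,0;0,0,0;0,1,0] : Matrix (Fin 3) (Fin 3) K) ∈ T := by
    have h := T.mul_mem h20 h01
    convert h using 1
    ext i j
    fin_cases i <;> fin_cases j <;> simp [Matrix.mul_apply, Fin.sum_univ_three, Matrix.vecHead, Matrix.vecTail] <;> norm_num
  intro A _
  rw [Matrix.eta_fin_three A]
  have key : (!![A 0 0, A 0 1, A 0 2; A 1 0, A 1 1, A 1 2; A 2 0, A 2 1, A 2 2]
      : Matrix (Fin 3) (Fin 3) K) =
      A 0 0 • !![1,0,0;0,0,0;0,0,0] + A 0 1 • !![0,1,0;0,0,0;0,0,0] +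
      A 0 2 • !![0,0,1;0,0,0;0,0,0] + A 1 0 • !![0,0,0;1,0,0;0,0,0] +
      A 1 1 • !![0,0,0;0,1,0;0,0,0] + A 1 2 • !![0,0,0;0,0,1;0,0,0] +
      A 2 0 • !![0,0,0;0,0,0;1,0,0] + A 2 1 • !![0,0,0;0,0,0;0,1,0] +
      A 2 2 • !![0,0,0;0,0,0;0,0,1] := by
    ext i j
    fin_cases i <;> fin_cases j <;> simp [Matrix.vecHead, Matrix.vecTail]
  rw [key]
  exact T.add_mem (T.add_mem (T.add_mem (T.add_mem (T.add_mem (T.add_mem (T.add_mem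
    (T.add_mem (T.smul_mem h00 _) (T.smul_mem h01 _)) (T.smul_mem h02 _))
    (T.smul_mem h10 _)) (T.smul_mem h11 _)) (T.smul_mem h12 _)) (T.smul_mem h20 _))
    (T.smul_mem h21 _)) (T.smul_mem h22 _)
end
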